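/- Let r(x_1,…,x_l) be a polynomial divisible by the product x_1 x_2 ⋯ x_l, and for n ≥ l define R̃_n(x_1,…,x_n) = ∑_{ω∈S(n)} r(x_{ω(1)},…,x_{ω(l)}) · ∏_{i≤l, i<j≤n} (x_{ω(i)}+x_{ω(j)})/(x_{ω(i)}−x_{ω(j)}). Then R̃_{n+1}(x_1,…,x_n,0) = (n+1−l) · R̃_n(x_1,…,x_n). -/

import Mathlib

set_option maxHeartbeats 1000000
set_option synthInstance.maxHeartbeats 400000


noncomputable section


noncomputable section

abbrev K (n : ℕ) : Type := FractionRing (MvPolynomial (Fin n) ℂ)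

def Xv {n : ℕ} (i : Fin n) : K n :=
  algebraMap (MvPolynomial (Fin n) ℂ) (K n) (MvPolynomial.X i)

/-- The product over pairs `i < j` with `i < l` of `(x i + x j)/(x i - x j)`. -/
def ratioProd {n : ℕ} (l : ℕ) (x : Fin n → K n) : K n :=
  ∏ p ∈ Finset.univ.filter (fun p : Fin n × Fin n => (p.1 : ℕ) < l ∧ p.1 < p.2),
    (x p.1 + x p.2) / (x p.1 - x p.2)

/-- `R̃_n = ∑_{ω ∈ S(n)} r(x_{ω(1)},…,x_{ω(l)}) ∏_{i≤l, i<j≤n}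
(x_{ω(i)}+x_{ω(j)})/(x_{ω(i)}−x_{ω(j)})`, as a rational function. -/
def Rtilde (n l : ℕ) (hl : l ≤ n) (r : MvPolynomial (Fin l) ℂ) : K n :=
  ∑ ω : Equiv.Perm (Fin n),
    (MvPolynomial.eval₂
        ((algebraMap (MvPolynomial (Fin n) ℂ) (K n)).comp MvPolynomial.C)
        (fun i : Fin l => Xv (ω (Fin.castLE hl i))) r) *
      ratioProd l (fun j => Xv (ω j))


namespace RtildeAux

open MvPolynomial Finset Equiv

variable (n : ℕ)

/-- The pair index set. -/
abbrev Pl (m l : ℕ) : Finset (Fin m × Fin m) :=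
  Finset.univ.filter (fun p : Fin m × Fin m => (p.1 : ℕ) < l ∧ p.1 < p.2)

/-- Specialization of the last variable to 0, as a ring hom into the fraction field. -/
def ev : MvPolynomial (Fin (n + 1)) ℂ →+* K n :=
  (algebraMap (MvPolynomial (Fin n) ℂ) (K n)).comp
    (MvPolynomial.aeval (fun i : Fin (n + 1) =>
      if h : (i : ℕ) < n then (MvPolynomial.X ⟨i, h⟩ : MvPolynomial (Fin n) ℂ) else 0)).toRingHom

def yv : Fin (n + 1) → K n := fun i => if h : (i : ℕ) < n then Xv ⟨i, h⟩ else 0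

lemma ev_X (i : Fin (n + 1)) : ev n (MvPolynomial.X i) = yv n i := by
  simp only [ev, RingHom.comp_apply, AlgHom.toRingHom_eq_coe, RingHom.coe_coe, aeval_X, yv]
  split <;> simp [Xv]

lemma algebraMap_inj :
    Function.Injective (algebraMap (MvPolynomial (Fin n) ℂ) (K n)) :=
  IsFractionRing.injective _ _

lemma Xv_ne_zero (i : Fin n) : Xv i ≠ 0 := by
  intro h
  exact MvPolynomial.X_ne_zero i (algebraMap_inj n (by simpa [Xv] using h))

lemma Xv_injective : Function.Injective (Xv (n := n)) := fun i j h =>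
  MvPolynomial.X_injective (algebraMap_inj n h)

lemma yv_castSucc (k : Fin n) : yv n (Fin.castSucc k) = Xv k := by
  simp [yv, k.is_lt]

lemma yv_last : yv n (Fin.last n) = 0 := by simp [yv]

lemma yv_sub_ne_zero {a b : Fin (n + 1)} (h : a ≠ b) : yv n a - yv n b ≠ 0 := by
  have hv : (a : ℕ) ≠ (b : ℕ) := fun hv => h (Fin.ext hv)
  unfold yv
  split_ifs with h1 h2 h2
  · refine sub_ne_zero_of_ne fun hh => hv ?_
    simpa [Fin.mk.injEq] using Xv_injective n hh
  · simpa using Xv_ne_zero n _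
  · simpa using Xv_ne_zero n _
  · omega


section Loc

/-- Denominators: polynomials whose specialization is nonzero. -/
def Mden : Submonoid (MvPolynomial (Fin (n + 1)) ℂ) :=
  Submonoid.comap (ev n).toMonoidHom (nonZeroDivisors (K n))

abbrev L := Localization (Mden n)

lemma mem_Mden {m : MvPolynomial (Fin (n + 1)) ℂ} :
    m ∈ Mden n ↔ ev n m ≠ 0 := by
  simp [Mden, Submonoid.mem_comap, mem_nonZeroDivisors_iff_ne_zero]

lemma ev_isUnit (m : Mden n) : IsUnit (ev n m) :=
  isUnit_iff_ne_zero.mpr ((mem_Mden n).mp m.2)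

def φ : L n →+* K n := IsLocalization.lift (ev_isUnit n)

lemma Mden_ne_zero (m : Mden n) : (m : MvPolynomial (Fin (n + 1)) ℂ) ≠ 0 := by
  intro h
  exact (mem_Mden n).mp m.2 (by rw [h, map_zero])

lemma alg_isUnit (m : Mden n) :
    IsUnit (algebraMap (MvPolynomial (Fin (n + 1)) ℂ) (K (n + 1)) m) :=
  isUnit_iff_ne_zero.mpr fun h =>
    Mden_ne_zero n m (IsFractionRing.injective (MvPolynomial (Fin (n + 1)) ℂ) (K (n + 1))
      (by rw [h, map_zero]))

def ψ : L n →+* K (n + 1) := IsLocalization.lift (alg_isUnit n)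

lemma ψ_inj : Function.Injective (ψ n) := by
  rw [injective_iff_map_eq_zero]
  intro x hx
  obtain ⟨⟨a, m⟩, rfl⟩ := IsLocalization.mk'_surjective (Mden n) x
  rw [ψ, IsLocalization.lift_mk'_spec, mul_zero] at hx
  have : a = 0 := IsFractionRing.injective (MvPolynomial (Fin (n + 1)) ℂ) (K (n + 1))
    (by rw [hx, map_zero])
  rw [this]
  exact IsLocalization.mk'_zero _

lemma ψ_algebraMap (x : MvPolynomial (Fin (n + 1)) ℂ) :
    ψ n (algebraMap _ (L n) x) = algebraMap _ (K (n + 1)) x :=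
  IsLocalization.lift_eq _ _

lemma φ_algebraMap (x : MvPolynomial (Fin (n + 1)) ℂ) :
    φ n (algebraMap _ (L n) x) = ev n x :=
  IsLocalization.lift_eq _ _

end Loc

lemma field_helper {F : Type*} [Field F] (e S d : F) (hd : d ≠ 0) :
    e * S = d * (e * (S / d)) := by
  field_simp

section Terms

variable (l : ℕ) (r : MvPolynomial (Fin l) ℂ)

def den (ω : Equiv.Perm (Fin (n + 1))) : MvPolynomial (Fin (n + 1)) ℂ :=
  ∏ p ∈ Pl (n + 1) l, (MvPolynomial.X (ω p.1) - MvPolynomial.X (ω p.2))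

def num (hl1 : l ≤ n + 1) (ω : Equiv.Perm (Fin (n + 1))) : MvPolynomial (Fin (n + 1)) ℂ :=
  MvPolynomial.eval₂ MvPolynomial.C
      (fun i : Fin l => MvPolynomial.X (ω (Fin.castLE hl1 i))) r *
    ∏ p ∈ Pl (n + 1) l, (MvPolynomial.X (ω p.1) + MvPolynomial.X (ω p.2))

lemma ev_den_ne (ω : Equiv.Perm (Fin (n + 1))) : ev n (den n l ω) ≠ 0 := by
  rw [den, map_prod]
  refine Finset.prod_ne_zero_iff.mpr fun p hp => ?_
  rw [map_sub, ev_X, ev_X]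
  simp only [Pl, mem_filter] at hp
  exact yv_sub_ne_zero n fun h => absurd (ω.injective h) (ne_of_lt hp.2.2)

lemma den_mem (ω : Equiv.Perm (Fin (n + 1))) : den n l ω ∈ Mden n :=
  (mem_Mden n).mpr (ev_den_ne n l ω)

def t (hl1 : l ≤ n + 1) (ω : Equiv.Perm (Fin (n + 1))) : L n :=
  IsLocalization.mk' (L n) (num n l r hl1 ω) ⟨den n l ω, den_mem n l ω⟩

lemma den_alg_ne (ω : Equiv.Perm (Fin (n + 1))) :
    algebraMap (MvPolynomial (Fin (n + 1)) ℂ) (K (n + 1)) (den n l ω) ≠ 0 := by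
  intro h
  exact ev_den_ne n l ω (by
    rw [IsFractionRing.injective (MvPolynomial (Fin (n + 1)) ℂ) (K (n + 1))
      (h.trans (map_zero _).symm), map_zero])

lemma ψ_t (hl1 : l ≤ n + 1) (ω : Equiv.Perm (Fin (n + 1))) :
    ψ n (t n l r hl1 ω) =
      (MvPolynomial.eval₂
          ((algebraMap (MvPolynomial (Fin (n + 1)) ℂ) (K (n + 1))).comp MvPolynomial.C)
          (fun i : Fin l => Xv (ω (Fin.castLE hl1 i))) r) *
        ratioProd l (fun j => Xv (ω j)) := by
  rw [t, ψ, IsLocalization.lift_mk'_spec]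
  set A := algebraMap (MvPolynomial (Fin (n + 1)) ℂ) (K (n + 1)) with hA
  have hden : A (den n l ω) = ∏ p ∈ Pl (n + 1) l, (Xv (ω p.1) - Xv (ω p.2)) := by
    rw [den, map_prod]; simp [Xv]; rfl
  have hrp : ratioProd l (fun j => Xv (ω j)) =
      (∏ p ∈ Pl (n + 1) l, (Xv (ω p.1) + Xv (ω p.2))) / A (den n l ω) := by
    rw [ratioProd, Finset.prod_div_distrib, hden]
  rw [num, map_mul, MvPolynomial.eval₂_comp_left A MvPolynomial.C _ r, hrp]
  have h2 : A ∘ (fun i : Fin l => MvPolynomial.X (ω (Fin.castLE hl1 i)))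
      = fun i : Fin l => Xv (ω (Fin.castLE hl1 i)) := rfl
  rw [h2, map_prod]
  simp only [map_add]
  exact field_helper _ _ _ (den_alg_ne n l ω)

/-- The specialized value of the `ω`-term. -/
def fterm (hl1 : l ≤ n + 1) (ω : Equiv.Perm (Fin (n + 1))) : K n :=
  (MvPolynomial.eval₂
      ((algebraMap (MvPolynomial (Fin n) ℂ) (K n)).comp MvPolynomial.C)
      (fun i : Fin l => yv n (ω (Fin.castLE hl1 i))) r) *
    ∏ p ∈ Pl (n + 1) l,
      (yv n (ω p.1) + yv n (ω p.2)) / (yv n (ω p.1) - yv n (ω p.2))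

lemma φ_t (hl1 : l ≤ n + 1) (ω : Equiv.Perm (Fin (n + 1))) :
    φ n (t n l r hl1 ω) = fterm n l r hl1 ω := by
  rw [fterm]
  rw [t, φ, IsLocalization.lift_mk'_spec]
  have hden : ev n (den n l ω) = ∏ p ∈ Pl (n + 1) l, (yv n (ω p.1) - yv n (ω p.2)) := by
    rw [den, map_prod]; simp [ev_X]
  have hC : (ev n).comp (MvPolynomial.C : ℂ →+* MvPolynomial (Fin (n + 1)) ℂ)
      = (algebraMap (MvPolynomial (Fin n) ℂ) (K n)).comp MvPolynomial.C := by
    refine RingHom.ext fun c => ?_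
    simp [ev, MvPolynomial.algebraMap_eq]
  rw [num, map_mul, MvPolynomial.eval₂_comp_left (ev n) MvPolynomial.C _ r, hC, map_prod]
  have h2 : (ev n) ∘ (fun i : Fin l => MvPolynomial.X (ω (Fin.castLE hl1 i)))
      = fun i : Fin l => yv n (ω (Fin.castLE hl1 i)) := funext fun i => ev_X n _
  rw [h2]
  simp only [map_add, ev_X]
  have hrp : (∏ p ∈ Pl (n + 1) l,
        (yv n (ω p.1) + yv n (ω p.2)) / (yv n (ω p.1) - yv n (ω p.2)))
      = (∏ p ∈ Pl (n + 1) l, (yv n (ω p.1) + yv n (ω p.2))) / ev n (den n l ω) := by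
    rw [Finset.prod_div_distrib, hden]
  rw [hrp]
  exact field_helper _ _ _ (ev_den_ne n l ω)

end Terms

section Perms

def ext1 (σ : Equiv.Perm (Fin n)) : Equiv.Perm (Fin (n + 1)) :=
  finSuccEquivLast.trans ((Equiv.optionCongr σ).trans finSuccEquivLast.symm)

lemma ext1_castSucc (σ : Equiv.Perm (Fin n)) (k : Fin n) :
    ext1 n σ (Fin.castSucc k) = Fin.castSucc (σ k) := by
  simp [ext1]

lemma ext1_last (σ : Equiv.Perm (Fin n)) : ext1 n σ (Fin.last n) = Fin.last n := by
  simp [ext1]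

def Dperm (ρ : Equiv.Perm (Fin (n + 1))) : Equiv.Perm (Fin n) :=
  Equiv.removeNone (finSuccEquivLast.symm.trans (ρ.trans finSuccEquivLast))

lemma Dperm_ext1 (σ : Equiv.Perm (Fin n)) : Dperm n (ext1 n σ) = σ := by
  refine Equiv.ext fun k => ?_
  have h : (finSuccEquivLast.symm.trans ((ext1 n σ).trans finSuccEquivLast)) (some k)
      = some (σ k) := by
    simp only [Equiv.trans_apply, finSuccEquivLast_symm_some]
    rw [ext1_castSucc, finSuccEquivLast_castSucc]
  exact Option.some_injective _ ((Equiv.removeNone_some _ ⟨σ k, h⟩).trans h)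

lemma ext1_Dperm (ρ : Equiv.Perm (Fin (n + 1))) (hρ : ρ (Fin.last n) = Fin.last n) :
    ext1 n (Dperm n ρ) = ρ := by
  refine Equiv.ext fun j => ?_
  induction j using Fin.lastCases with
  | last => rw [ext1_last, hρ]
  | cast k =>
    rw [ext1_castSucc]
    have hne : ρ (Fin.castSucc k) ≠ Fin.last n := by
      intro h
      have := ρ.injective (h.trans hρ.symm)
      have hk := k.is_lt
      simp only [Fin.ext_iff, Fin.coe_castSucc, Fin.val_last] at this
      omega
    obtain ⟨m, hm⟩ : ∃ m : Fin n, ρ (Fin.castSucc k) = Fin.castSucc m :=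
      ⟨(ρ (Fin.castSucc k)).castPred hne, (Fin.castSucc_castPred _ hne).symm⟩
    have h : (finSuccEquivLast.symm.trans (ρ.trans finSuccEquivLast)) (some k) = some m := by
      simp only [Equiv.trans_apply, finSuccEquivLast_symm_some]
      rw [hm, finSuccEquivLast_castSucc]
    have h2 : Dperm n ρ k = m :=
      Option.some_injective _ ((Equiv.removeNone_some _ ⟨m, h⟩).trans h)
    rw [h2, ← hm]

def Eperm (j₀ : Fin (n + 1)) (σ : Equiv.Perm (Fin n)) : Equiv.Perm (Fin (n + 1)) :=
  (Equiv.swap j₀ (Fin.last n)).trans (ext1 n σ)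

lemma Eperm_apply (j₀ : Fin (n + 1)) (σ : Equiv.Perm (Fin n)) (j : Fin (n + 1)) :
    Eperm n j₀ σ j = ext1 n σ (Equiv.swap j₀ (Fin.last n) j) := rfl

lemma Eperm_j₀ (j₀ : Fin (n + 1)) (σ : Equiv.Perm (Fin n)) :
    Eperm n j₀ σ j₀ = Fin.last n := by
  rw [Eperm_apply, Equiv.swap_apply_left, ext1_last]

lemma swap_trans_twice {α : Type*} [DecidableEq α] (a b : α) (f : Equiv.Perm α) :
    (Equiv.swap a b).trans ((Equiv.swap a b).trans f) = f :=
  Equiv.ext fun x => by simp [Equiv.trans_apply, Equiv.swap_apply_self]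

lemma Dperm_Eperm (j₀ : Fin (n + 1)) (σ : Equiv.Perm (Fin n)) :
    Dperm n ((Equiv.swap j₀ (Fin.last n)).trans (Eperm n j₀ σ)) = σ := by
  rw [Eperm, swap_trans_twice, Dperm_ext1]

lemma Eperm_Dperm (j₀ : Fin (n + 1)) (ρ : Equiv.Perm (Fin (n + 1)))
    (hρ : ρ j₀ = Fin.last n) :
    Eperm n j₀ (Dperm n ((Equiv.swap j₀ (Fin.last n)).trans ρ)) = ρ := by
  rw [Eperm, ext1_Dperm]
  · exact swap_trans_twice _ _ _
  · simp only [Equiv.trans_apply, Equiv.swap_apply_right]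
    exact hρ

lemma yv_ext1 (σ : Equiv.Perm (Fin n)) (j : Fin (n + 1)) (h : j ≠ Fin.last n) :
    yv n (ext1 n σ j) = Xv (σ (j.castPred h)) := by
  conv_lhs => rw [← Fin.castSucc_castPred j h]
  rw [ext1_castSucc, yv_castSucc]

lemma yv_Eperm_ne (j₀ : Fin (n + 1)) (σ : Equiv.Perm (Fin n)) (j : Fin (n + 1))
    (hne : Equiv.swap j₀ (Fin.last n) j ≠ Fin.last n) :
    yv n (Eperm n j₀ σ j) = Xv (σ ((Equiv.swap j₀ (Fin.last n) j).castPred hne)) := by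
  rw [Eperm_apply, yv_ext1]

lemma yv_Eperm_small {l : ℕ} (hl : l ≤ n) (j₀ : Fin (n + 1)) (hj : l ≤ (j₀ : ℕ))
    (σ : Equiv.Perm (Fin n)) (j : Fin (n + 1)) (hjl : (j : ℕ) < l) :
    yv n (Eperm n j₀ σ j) = Xv (σ ⟨(j : ℕ), by omega⟩) := by
  have h1 : j ≠ j₀ := Fin.ne_of_val_ne (by omega)
  have h2 : j ≠ Fin.last n := Fin.ne_of_val_ne (by simp only [Fin.val_last]; omega)
  have hs : Equiv.swap j₀ (Fin.last n) j = j := Equiv.swap_apply_of_ne_of_ne h1 h2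
  have hne : Equiv.swap j₀ (Fin.last n) j ≠ Fin.last n := by rw [hs]; exact h2
  rw [yv_Eperm_ne n j₀ σ j hne]
  have he : (Equiv.swap j₀ (Fin.last n) j).castPred hne = ⟨(j : ℕ), by omega⟩ := by
    apply Fin.ext
    simp [hs]
  rw [he]

end Perms

section Key

variable (l : ℕ) (r : MvPolynomial (Fin l) ℂ)

lemma fterm_Eperm (hl : l ≤ n) (j₀ : Fin (n + 1)) (hj : l ≤ (j₀ : ℕ))
    (σ : Equiv.Perm (Fin n)) :
    fterm n l r (hl.trans (Nat.le_succ n)) (Eperm n j₀ σ) =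
      (MvPolynomial.eval₂
          ((algebraMap (MvPolynomial (Fin n) ℂ) (K n)).comp MvPolynomial.C)
          (fun i : Fin l => Xv (σ (Fin.castLE hl i))) r) *
        ratioProd l (fun j => Xv (σ j)) := by
  rw [fterm]
  have hnum : (fun i : Fin l => yv n (Eperm n j₀ σ (Fin.castLE (hl.trans (Nat.le_succ n)) i)))
      = fun i : Fin l => Xv (σ (Fin.castLE hl i)) := by
    funext i
    rw [yv_Eperm_small n hl j₀ hj σ _ (by simpa using i.is_lt)]
    congr 1
  rw [hnum]
  congr 1
  rw [← Finset.prod_filter_mul_prod_filter_not (Pl (n + 1) l) (fun p => p.2 = j₀)]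
  have hA : (∏ p ∈ (Pl (n + 1) l).filter (fun p => p.2 = j₀),
      (yv n (Eperm n j₀ σ p.1) + yv n (Eperm n j₀ σ p.2)) /
        (yv n (Eperm n j₀ σ p.1) - yv n (Eperm n j₀ σ p.2))) = 1 := by
    refine Finset.prod_eq_one fun p hp => ?_
    simp only [Pl, Finset.mem_filter, Finset.mem_univ, true_and] at hp
    obtain ⟨⟨hp1, _⟩, hp2⟩ := hp
    rw [hp2, Eperm_j₀, yv_last, yv_Eperm_small n hl j₀ hj σ _ hp1, add_zero, sub_zero,
      div_self (Xv_ne_zero n _)]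
  rw [hA, one_mul]
  rw [ratioProd]
  refine Finset.prod_bij'
    (i := fun p hp => ((⟨(p.1 : ℕ), by
        simp only [Pl, Finset.mem_filter, Finset.mem_univ, true_and] at hp; omega⟩ : Fin n),
      (Equiv.swap j₀ (Fin.last n) p.2).castPred (by
        simp only [Pl, Finset.mem_filter, Finset.mem_univ, true_and] at hp
        intro hc
        exact hp.2 ((Equiv.swap j₀ (Fin.last n)).injective
          (hc.trans (Equiv.swap_apply_left j₀ (Fin.last n)).symm)))))
    (j := fun q _ => (Fin.castSucc q.1, Equiv.swap j₀ (Fin.last n) (Fin.castSucc q.2)))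
    ?_ ?_ ?_ ?_ ?_
  · -- hi : image in target
    intro p hp
    simp only [Pl, Finset.mem_filter, Finset.mem_univ, true_and] at hp ⊢
    obtain ⟨⟨hp1, hp12⟩, hp2⟩ := hp
    refine ⟨hp1, ?_⟩
    rw [Fin.lt_def]
    simp only [Fin.coe_castPred]
    rcases eq_or_ne p.2 (Fin.last n) with h | h
    · rw [h, Equiv.swap_apply_right]
      omega
    · rw [Equiv.swap_apply_of_ne_of_ne hp2 h]
      exact hp12
  · -- hj : preimage in source
    intro q hq
    simp only [Pl, Finset.mem_filter, Finset.mem_univ, true_and] at hq ⊢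
    obtain ⟨hq1, hq12⟩ := hq
    have hcs : (Fin.castSucc q.1 : ℕ) = (q.1 : ℕ) := rfl
    refine ⟨⟨by omega, ?_⟩, ?_⟩
    · rcases eq_or_ne (Fin.castSucc q.2) j₀ with h | h
      · rw [h, Equiv.swap_apply_left]
        exact Fin.castSucc_lt_last q.1
      · have h2 : Fin.castSucc q.2 ≠ Fin.last n := Fin.ne_of_val_ne (by
          simp only [Fin.coe_castSucc, Fin.val_last]; omega)
        rw [Equiv.swap_apply_of_ne_of_ne h h2]
        exact Fin.castSucc_lt_castSucc_iff.mpr hq12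
    · rcases eq_or_ne (Fin.castSucc q.2) j₀ with h | h
      · rw [h, Equiv.swap_apply_left]
        intro hc
        have hv := congrArg Fin.val (hc.trans h.symm)
        have hq2 := q.2.is_lt
        simp only [Fin.val_last, Fin.coe_castSucc] at hv
        omega
      · have h2 : Fin.castSucc q.2 ≠ Fin.last n := Fin.ne_of_val_ne (by
          simp only [Fin.coe_castSucc, Fin.val_last]; omega)
        rw [Equiv.swap_apply_of_ne_of_ne h h2]
        exact h
  · -- left_inv
    intro p hp
    simp only [Pl, Finset.mem_filter, Finset.mem_univ, true_and] at hp
    refine Prod.ext ?_ ?_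
    · apply Fin.ext
      rfl
    · show Equiv.swap j₀ (Fin.last n) (Fin.castSucc _) = p.2
      rw [Fin.castSucc_castPred, Equiv.swap_apply_self]
  · -- right_inv
    intro q hq
    refine Prod.ext ?_ ?_
    · apply Fin.ext
      rfl
    · apply Fin.ext
      simp only [Fin.coe_castPred, Equiv.swap_apply_self, Fin.coe_castSucc]
  · -- values
    intro p hp
    simp only [Pl, Finset.mem_filter, Finset.mem_univ, true_and] at hp
    obtain ⟨⟨hp1, hp12⟩, hp2⟩ := hp
    have hne : Equiv.swap j₀ (Fin.last n) p.2 ≠ Fin.last n := by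
      intro hc
      exact hp2 ((Equiv.swap j₀ (Fin.last n)).injective
        (hc.trans (Equiv.swap_apply_left j₀ (Fin.last n)).symm))
    rw [yv_Eperm_small n hl j₀ hj σ p.1 hp1, yv_Eperm_ne n j₀ σ p.2 hne]

lemma sum_fiber (hl : l ≤ n) (j₀ : Fin (n + 1)) (hj : l ≤ (j₀ : ℕ)) :
    (∑ ω ∈ Finset.univ.filter (fun ω : Equiv.Perm (Fin (n + 1)) => ω j₀ = Fin.last n),
      fterm n l r (hl.trans (Nat.le_succ n)) ω) = Rtilde n l hl r := by
  rw [Rtilde]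
  refine Finset.sum_bij'
    (i := fun ω _ => Dperm n ((Equiv.swap j₀ (Fin.last n)).trans ω))
    (j := fun σ _ => Eperm n j₀ σ) (fun _ _ => Finset.mem_univ _) ?_ ?_ ?_ ?_
  · intro σ _
    simp only [Finset.mem_filter, Finset.mem_univ, true_and]
    exact Eperm_j₀ n j₀ σ
  · intro ω hω
    simp only [Finset.mem_filter, Finset.mem_univ, true_and] at hω
    exact Eperm_Dperm n j₀ ω hω
  · intro σ _
    exact Dperm_Eperm n j₀ σ
  · intro ω hω
    simp only [Finset.mem_filter, Finset.mem_univ, true_and] at hω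
    conv_lhs => rw [← Eperm_Dperm n j₀ ω hω]
    rw [fterm_Eperm n l r hl j₀ hj]

lemma fterm_zero (hl : l ≤ n) (hdvd : (∏ i : Fin l, MvPolynomial.X i) ∣ r)
    (j₀ : Fin (n + 1)) (hj : (j₀ : ℕ) < l) (ω : Equiv.Perm (Fin (n + 1)))
    (hω : ω j₀ = Fin.last n) :
    fterm n l r (hl.trans (Nat.le_succ n)) ω = 0 := by
  obtain ⟨s, rfl⟩ := hdvd
  rw [fterm, MvPolynomial.eval₂_mul, MvPolynomial.eval₂_prod]
  have hi : (⟨(j₀ : ℕ), hj⟩ : Fin l) ∈ (Finset.univ : Finset (Fin l)) := Finset.mem_univ _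
  rw [Finset.prod_eq_zero hi]
  · ring
  · rw [MvPolynomial.eval₂_X]
    have : Fin.castLE (hl.trans (Nat.le_succ n)) (⟨(j₀ : ℕ), hj⟩ : Fin l) = j₀ :=
      Fin.ext rfl
    rw [this, hω, yv_last]

lemma card_filter_le : (Finset.univ.filter fun j₀ : Fin (n + 1) => l ≤ (j₀ : ℕ)).card
    = n + 1 - l := by
  rcases le_or_gt l (n + 1) with hl | hl
  · have h := Finset.card_bij
      (i := fun (j : Fin (n + 1)) (_ : j ∈ Finset.univ.filter fun j₀ : Fin (n + 1) => l ≤ (j₀ : ℕ)) => (j : ℕ))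
      (t := Finset.Ico l (n + 1)) ?_ ?_ ?_
    · rw [h, Nat.card_Ico]
    · intro a ha
      simp only [Finset.mem_filter, Finset.mem_univ, true_and] at ha
      simp only [Finset.mem_Ico]
      exact ⟨ha, a.is_lt⟩
    · intro a _ b _ hab
      exact Fin.ext hab
    · intro m hm
      simp only [Finset.mem_Ico] at hm
      exact ⟨⟨m, hm.2⟩, by simp [hm.1], rfl⟩
  · have : (Finset.univ.filter fun j₀ : Fin (n + 1) => l ≤ (j₀ : ℕ)) = ∅ := by
      refine Finset.eq_empty_of_forall_notMem fun j hjm => ?_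
      simp only [Finset.mem_filter, Finset.mem_univ, true_and] at hjm
      have := j.is_lt
      omega
    rw [this]
    simp
    omega

lemma key (hl : l ≤ n) (hdvd : (∏ i : Fin l, MvPolynomial.X i) ∣ r) :
    (∑ ω : Equiv.Perm (Fin (n + 1)), fterm n l r (hl.trans (Nat.le_succ n)) ω)
      = (n + 1 - l) • Rtilde n l hl r := by
  rw [← Finset.sum_fiberwise Finset.univ
    (fun ω : Equiv.Perm (Fin (n + 1)) => ω.symm (Fin.last n))
    (fterm n l r (hl.trans (Nat.le_succ n)))]
  have hcond : ∀ j₀ : Fin (n + 1),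
      (Finset.univ.filter fun ω : Equiv.Perm (Fin (n + 1)) => ω.symm (Fin.last n) = j₀)
        = Finset.univ.filter fun ω : Equiv.Perm (Fin (n + 1)) => ω j₀ = Fin.last n := by
    intro j₀
    ext ω
    simp only [Finset.mem_filter, Finset.mem_univ, true_and]
    rw [Equiv.symm_apply_eq, eq_comm]
  rw [← Finset.sum_filter_add_sum_filter_not Finset.univ (fun j₀ : Fin (n + 1) => l ≤ (j₀ : ℕ))]
  have h2 : (∑ j₀ ∈ Finset.univ.filter (fun j₀ : Fin (n + 1) => ¬ l ≤ (j₀ : ℕ)),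
      ∑ ω ∈ Finset.univ.filter
        (fun ω : Equiv.Perm (Fin (n + 1)) => ω.symm (Fin.last n) = j₀),
        fterm n l r (hl.trans (Nat.le_succ n)) ω) = 0 := by
    refine Finset.sum_eq_zero fun j₀ hj₀ => ?_
    simp only [Finset.mem_filter, Finset.mem_univ, true_and, not_le] at hj₀
    rw [hcond j₀]
    refine Finset.sum_eq_zero fun ω hω => ?_
    simp only [Finset.mem_filter, Finset.mem_univ, true_and] at hω
    exact fterm_zero n l r hl hdvd j₀ hj₀ ω hω
  have h1 : (∑ j₀ ∈ Finset.univ.filter (fun j₀ : Fin (n + 1) => l ≤ (j₀ : ℕ)),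
      ∑ ω ∈ Finset.univ.filter
        (fun ω : Equiv.Perm (Fin (n + 1)) => ω.symm (Fin.last n) = j₀),
        fterm n l r (hl.trans (Nat.le_succ n)) ω)
      = (n + 1 - l) • Rtilde n l hl r := by
    rw [Finset.sum_congr rfl (fun j₀ hj₀ => ?_), Finset.sum_const, card_filter_le]
    simp only [Finset.mem_filter, Finset.mem_univ, true_and] at hj₀
    rw [hcond j₀]
    exact sum_fiber n l r hl j₀ hj₀
  rw [h1, h2, add_zero]

end Key

end RtildeAux

/-- If `r` is divisible by `x_1 ⋯ x_l`, then setting the last variable of `R̃_{n+1}`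
to `0` gives `(n+1−l) · R̃_n`.  (Since the `R̃`'s are polynomials, this is stated via
arbitrary polynomial representatives `p` and `q`.) -/
theorem Rtilde_specialize_last_var
    (n l : ℕ) (hl : l ≤ n) (r : MvPolynomial (Fin l) ℂ)
    (hdvd : (∏ i : Fin l, MvPolynomial.X i) ∣ r)
    (p : MvPolynomial (Fin (n + 1)) ℂ) (q : MvPolynomial (Fin n) ℂ)
    (hp : algebraMap (MvPolynomial (Fin (n + 1)) ℂ) (K (n + 1)) p
        = Rtilde (n + 1) l (hl.trans (Nat.le_succ n)) r)
    (hq : algebraMap (MvPolynomial (Fin n) ℂ) (K n) q = Rtilde n l hl r) :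
    MvPolynomial.aeval
        (fun i : Fin (n + 1) =>
          if h : (i : ℕ) < n then (MvPolynomial.X ⟨i, h⟩ : MvPolynomial (Fin n) ℂ) else 0) p
      = ((n + 1 - l : ℕ) : ℂ) • q := by
  classical
  have hl1 : l ≤ n + 1 := hl.trans (Nat.le_succ n)
  have hψ : algebraMap (MvPolynomial (Fin (n + 1)) ℂ) (K (n + 1)) p
      = RtildeAux.ψ n (∑ ω : Equiv.Perm (Fin (n + 1)), RtildeAux.t n l r hl1 ω) := by
    rw [map_sum, hp, Rtilde]
    exact Finset.sum_congr rfl fun ω _ => (RtildeAux.ψ_t n l r hl1 ω).symm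
  have hloc : algebraMap (MvPolynomial (Fin (n + 1)) ℂ) (RtildeAux.L n) p
      = ∑ ω : Equiv.Perm (Fin (n + 1)), RtildeAux.t n l r hl1 ω :=
    RtildeAux.ψ_inj n (by rw [RtildeAux.ψ_algebraMap]; exact hψ)
  have hev : RtildeAux.ev n p
      = ∑ ω : Equiv.Perm (Fin (n + 1)), RtildeAux.fterm n l r hl1 ω := by
    rw [← RtildeAux.φ_algebraMap, hloc, map_sum]
    exact Finset.sum_congr rfl fun ω _ => RtildeAux.φ_t n l r hl1 ω
  have h3 : RtildeAux.ev n p = (n + 1 - l) • Rtilde n l hl r := by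
    rw [hev]
    exact RtildeAux.key n l r hl hdvd
  have h4 : RtildeAux.ev n p
      = algebraMap (MvPolynomial (Fin n) ℂ) (K n) ((n + 1 - l) • q) := by
    rw [h3, ← hq, map_nsmul]
  have h5 : (MvPolynomial.aeval
        (fun i : Fin (n + 1) =>
          if h : (i : ℕ) < n then (MvPolynomial.X ⟨i, h⟩ : MvPolynomial (Fin n) ℂ) else 0)) p
      = (n + 1 - l) • q := RtildeAux.algebraMap_inj n h4
  rw [h5]
  exact (Nat.cast_smul_eq_nsmul ℂ _ q).symm


end
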